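/- Let n ∈ ℝ with n ≠ 0 and n ≠ −1, let r, p ∈ ℝ, let I ⊆ ℝ be an open interval, ξ : I → (0,∞) smooth, and let Ξ : I → ℝ satisfy Ξ'(x) = 1/ξ(x). Define f(x) = ξ(x)^{−(3n+4)/(2n+2)}·exp(r·Ξ(x)) and h(x) = (ξ'(x)² − 2ξ(x)ξ''(x) − p)/(4(n+1)ξ(x)²). Let φ : ℝ → (0,∞) be twice differentiable and satisfy the reduced ODE (25) for all ω ∈ ℝ. Define u(t,x) = φ(t − Ξ(x))·ξ(x)^{1/(2n+2)}·exp((r/n)·Ξ(x)). Then u is a positive solution of f(x)u_tt − ∂_x(uⁿu_x) − h(x)u^{n+1} = 0 on ℝ × I. -/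

import Mathlib

open Real Set

noncomputable section

/-- Partial derivative in the first (time) variable of a function of `(t, x)`. -/
def pt2 (u : ℝ → ℝ → ℝ) : ℝ → ℝ → ℝ := fun t x => deriv (fun s => u s x) t

/-- Partial derivative in the second (space) variable of a function of `(t, x)`. -/
def px2 (u : ℝ → ℝ → ℝ) : ℝ → ℝ → ℝ := fun t x => deriv (fun y => u t y) x

/-- The reduced ODE (25):
`[(4r² − p)n² + 4(2n+1)r²]φ^{n+1} + 4n(n+1)[nφ'' − 2(n+1)rφ']φⁿ + 4n³(n+1)(φ')²φ^{n−1}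
 − 4n²(n+1)φ'' = 0`, for a positive function `φ` with first and second derivatives
`φ'`, `φ''`. -/
def ODE25 (n r p : ℝ) (φ φ' φ'' : ℝ → ℝ) (ω : ℝ) : Prop :=
  ((4 * r ^ 2 - p) * n ^ 2 + 4 * (2 * n + 1) * r ^ 2) * φ ω ^ (n + 1)
    + 4 * n * (n + 1) * (n * φ'' ω - 2 * (n + 1) * r * φ' ω) * φ ω ^ n
    + 4 * n ^ 3 * (n + 1) * (φ' ω) ^ 2 * φ ω ^ (n - 1)
    - 4 * n ^ 2 * (n + 1) * φ'' ω = 0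

set_option maxHeartbeats 4000000 in
/-- The ansatz `u = φ(t − Ξ(x)) ξ^{1/(2n+2)} e^{(r/n)Ξ}` built from the
reduction operator `∂_t + ξ(x)∂_x + (r/n + ξ_x/(2n+2))u∂_u` turns any positive solution
`φ` of the reduced ODE (25) into a positive solution of
`f u_tt − (uⁿu_x)_x − h u^{n+1} = 0` with `f = ξ^{−(3n+4)/(2n+2)}e^{rΞ}`,
`h = (ξ'² − 2ξξ'' − p)/(4(n+1)ξ²)`. -/
theorem nonclassical_reduction
    (n : ℝ) (hn : n ≠ 0) (hn1 : n ≠ -1) (r p : ℝ)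
    (I : Set ℝ) (hI : IsOpen I) (hIc : I.OrdConnected)
    (ξ : ℝ → ℝ) (hξ : ContDiffOn ℝ (⊤ : ℕ∞) ξ I) (hξpos : ∀ x ∈ I, 0 < ξ x)
    (Ξ : ℝ → ℝ) (hΞ : ∀ x ∈ I, HasDerivAt Ξ (1 / ξ x) x)
    (f h : ℝ → ℝ)
    (hfdef : ∀ x ∈ I,
      f x = ξ x ^ (-(3 * n + 4) / (2 * n + 2)) * Real.exp (r * Ξ x))
    (hhdef : ∀ x ∈ I,
      h x = ((deriv ξ x) ^ 2 - 2 * ξ x * deriv (deriv ξ) x - p) / (4 * (n + 1) * (ξ x) ^ 2))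
    (φ φ' φ'' : ℝ → ℝ) (hφpos : ∀ ω : ℝ, 0 < φ ω)
    (hd1 : ∀ ω : ℝ, HasDerivAt φ (φ' ω) ω) (hd2 : ∀ ω : ℝ, HasDerivAt φ' (φ'' ω) ω)
    (hODE : ∀ ω : ℝ, ODE25 n r p φ φ' φ'' ω)
    (u : ℝ → ℝ → ℝ)
    (hudef : ∀ t : ℝ, ∀ x ∈ I,
      u t x = φ (t - Ξ x) * ξ x ^ ((1 : ℝ) / (2 * n + 2)) * Real.exp ((r / n) * Ξ x)) :
    ∀ t : ℝ, ∀ x ∈ I,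
      0 < u t x ∧
      f x * pt2 (pt2 u) t x
        - deriv (fun y => (u t y) ^ n * px2 u t y) x
        - h x * (u t x) ^ (n + 1) = 0 := by
  intro t x hx
  have hn1' : n + 1 ≠ 0 := fun hh => hn1 (by linarith)
  have h2n2 : (2 * n + 2) ≠ 0 := fun hh => hn1 (by linarith)
  set a : ℝ := (1 : ℝ) / (2 * n + 2) with ha
  set b : ℝ := r / n with hb
  have hXx : (0 : ℝ) < ξ x := hξpos x hx
  -- first derivative of ξ on I
  have hdiff : ∀ y ∈ I, HasDerivAt ξ (deriv ξ y) y := fun y hy =>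
    (((hξ.differentiableOn (by simp)).differentiableAt (hI.mem_nhds hy)).hasDerivAt)
  -- second derivative of ξ at x
  have hd2ξ : HasDerivAt (deriv ξ) (deriv (deriv ξ) x) x := by
    have h1 : ContDiffOn ℝ (⊤ : ℕ∞) (deriv ξ) I := hξ.deriv_of_isOpen hI (by exact_mod_cast le_top)
    exact ((h1.differentiableOn (by simp)).differentiableAt (hI.mem_nhds hx)).hasDerivAt
  -- the auxiliary factor g
  set g : ℝ → ℝ := fun y => ξ y ^ a * Real.exp (b * Ξ y) with hgdef
  have hgpos : ∀ y ∈ I, 0 < g y := fun y hy =>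
    mul_pos (Real.rpow_pos_of_pos (hξpos y hy) a) (Real.exp_pos _)
  have hgd : ∀ y ∈ I, HasDerivAt g (g y * (a * deriv ξ y + b) / ξ y) y := by
    intro y hy
    have hXy : (0 : ℝ) < ξ y := hξpos y hy
    have h1 : HasDerivAt (fun z => ξ z ^ a) (deriv ξ y * a * ξ y ^ (a - 1)) y :=
      (hdiff y hy).rpow_const (Or.inl hXy.ne')
    have h2 : HasDerivAt (fun z => Real.exp (b * Ξ z))
        (Real.exp (b * Ξ y) * (b * (1 / ξ y))) y := ((hΞ y hy).const_mul b).exp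
    have h3 : HasDerivAt (fun z => ξ z ^ a * Real.exp (b * Ξ z)) _ y := h1.mul h2
    convert h3 using 1
    rw [Real.rpow_sub hXy, Real.rpow_one]
    simp only [hgdef]
    field_simp
  -- chain rules for φ, φ' in x
  have hωd : ∀ y ∈ I, HasDerivAt (fun z => t - Ξ z) (-(1 / ξ y)) y := fun y hy =>
    (hΞ y hy).const_sub t
  have hφc : ∀ y ∈ I, HasDerivAt (fun z => φ (t - Ξ z)) (φ' (t - Ξ y) * -(1 / ξ y)) y :=
    fun y hy => (hd1 (t - Ξ y)).comp y (hωd y hy)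
  have hφ'c : HasDerivAt (fun z => φ' (t - Ξ z)) (φ'' (t - Ξ x) * -(1 / ξ x)) x :=
    (hd2 (t - Ξ x)).comp x (hωd x hx)
  -- positivity of u
  have hupos : 0 < u t x := by
    rw [hudef t x hx]
    exact mul_pos (mul_pos (hφpos _) (Real.rpow_pos_of_pos hXx a)) (Real.exp_pos _)
  refine ⟨hupos, ?_⟩
  -- time derivatives
  have hueq : ∀ y ∈ I, (fun s => u s y) = fun s => φ (s - Ξ y) * g y := by
    intro y hy; funext s
    rw [hudef s y hy]; simp only [hgdef]; ring
  have hpt : ∀ s : ℝ, pt2 u s x = φ' (s - Ξ x) * g x := by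
    intro s
    have hder : HasDerivAt (fun s' => φ (s' - Ξ x) * g x) (φ' (s - Ξ x) * 1 * g x) s :=
      ((hd1 (s - Ξ x)).comp s ((hasDerivAt_id s).sub_const (Ξ x))).mul_const (g x)
    rw [show pt2 u s x = deriv (fun s' => u s' x) s from rfl, hueq x hx, hder.deriv]
    ring
  have hptt : pt2 (pt2 u) t x = φ'' (t - Ξ x) * g x := by
    have h1 : (fun s => pt2 u s x) = fun s => φ' (s - Ξ x) * g x := funext fun s => hpt s
    have hder : HasDerivAt (fun s => φ' (s - Ξ x) * g x) (φ'' (t - Ξ x) * 1 * g x) t :=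
      ((hd2 (t - Ξ x)).comp t ((hasDerivAt_id t).sub_const (Ξ x))).mul_const (g x)
    rw [show pt2 (pt2 u) t x = deriv (fun s => pt2 u s x) t from rfl, h1, hder.deriv]
    ring
  -- space derivative of u on I
  have hpx : ∀ y ∈ I, px2 u t y
      = g y * (-(φ' (t - Ξ y)) + φ (t - Ξ y) * (a * deriv ξ y + b)) / ξ y := by
    intro y hy
    have hXy : (0 : ℝ) < ξ y := hξpos y hy
    have hev : (fun z => u t z) =ᶠ[nhds y] fun z => φ (t - Ξ z) * g z := by
      filter_upwards [hI.mem_nhds hy] with z hz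
      rw [hudef t z hz]; simp only [hgdef]; ring
    have hder : HasDerivAt (fun z => φ (t - Ξ z) * g z) _ y := (hφc y hy).mul (hgd y hy)
    rw [show px2 u t y = deriv (fun z => u t z) y from rfl, hev.deriv_eq, hder.deriv]
    field_simp
  -- the function  uⁿ u_x  agrees near x with an explicit expression
  have hW : (fun y => u t y ^ n * px2 u t y) =ᶠ[nhds x]
      fun y => φ (t - Ξ y) ^ n * g y ^ (n + 1)
        * ((-(φ' (t - Ξ y)) + φ (t - Ξ y) * (a * deriv ξ y + b)) / ξ y) := by
    filter_upwards [hI.mem_nhds hx] with y hy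
    have hXy : (0 : ℝ) < ξ y := hξpos y hy
    have hgy : (0 : ℝ) < g y := hgpos y hy
    rw [hpx y hy, hudef t y hy]
    rw [show φ (t - Ξ y) * ξ y ^ a * Real.exp (b * Ξ y) = φ (t - Ξ y) * g y by
      simp only [hgdef]; ring]
    rw [Real.mul_rpow (hφpos _).le hgy.le, Real.rpow_add_one hgy.ne' n]
    ring
  -- derivative of the explicit expression at x
  have hA : (0 : ℝ) < φ (t - Ξ x) := hφpos _
  have hgx : (0 : ℝ) < g x := hgpos x hx
  have hF1 : HasDerivAt (fun y => φ (t - Ξ y) ^ n)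
      (φ' (t - Ξ x) * -(1 / ξ x) * n * φ (t - Ξ x) ^ (n - 1)) x :=
    (hφc x hx).rpow_const (Or.inl hA.ne')
  have hF2 : HasDerivAt (fun y => g y ^ (n + 1))
      ((g x * (a * deriv ξ x + b) / ξ x) * (n + 1) * g x ^ (n + 1 - 1)) x :=
    (hgd x hx).rpow_const (Or.inl hgx.ne')
  have hM := ((hφ'c).neg).add ((hφc x hx).mul ((hd2ξ.const_mul a).add_const b))
  have hF3 := hM.div (hdiff x hx) hXx.ne'
  have hDW : HasDerivAt (fun y => φ (t - Ξ y) ^ n * g y ^ (n + 1)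
        * ((-(φ' (t - Ξ y)) + φ (t - Ξ y) * (a * deriv ξ y + b)) / ξ y)) _ x :=
    (hF1.mul hF2).mul hF3
  -- rpow bookkeeping
  have hEb : (0 : ℝ) < Real.exp (b * Ξ x) := Real.exp_pos _
  have e4 : φ (t - Ξ x) ^ (n - 1) = φ (t - Ξ x) ^ n / φ (t - Ξ x) := by
    rw [Real.rpow_sub hA, Real.rpow_one]
  have e5 : φ (t - Ξ x) ^ (n + 1) = φ (t - Ξ x) ^ n * φ (t - Ξ x) :=
    Real.rpow_add_one hA.ne' n
  have e2 : (ξ x ^ a * Real.exp (b * Ξ x)) ^ (n + 1)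
      = ξ x ^ (a * (n + 1)) * (Real.exp (r * Ξ x) * Real.exp (b * Ξ x)) := by
    rw [Real.mul_rpow (Real.rpow_pos_of_pos hXx a).le hEb.le,
      ← Real.rpow_mul hXx.le, ← Real.exp_mul, ← Real.exp_add]
    congr 1
    rw [hb]; field_simp
  have e3 : (ξ x ^ a * Real.exp (b * Ξ x)) ^ n
      = ξ x ^ (a * (n + 1)) / ξ x ^ a * Real.exp (r * Ξ x) := by
    rw [Real.mul_rpow (Real.rpow_pos_of_pos hXx a).le hEb.le,
      ← Real.rpow_mul hXx.le, ← Real.exp_mul, ← Real.rpow_sub hXx]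
    congr 1
    · congr 1; ring
    · rw [hb]; field_simp
  have e1 : ξ x ^ (-(3 * n + 4) / (2 * n + 2))
      = ξ x ^ (a * (n + 1)) / (ξ x ^ a * ξ x ^ (2 : ℕ)) := by
    rw [← Real.rpow_natCast (ξ x) 2, ← Real.rpow_add hXx, ← Real.rpow_sub hXx]
    congr 1
    rw [ha]; field_simp; ring
  -- the key derivative, in clean form
  have hkey : deriv (fun y => u t y ^ n * px2 u t y) x
      = φ (t - Ξ x) ^ n / φ (t - Ξ x)
          * (ξ x ^ (a * (n + 1)) * (Real.exp (r * Ξ x) * Real.exp (b * Ξ x))) / ξ x ^ (2 : ℕ)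
          * (n * φ' (t - Ξ x) ^ 2
            - (2 * (n + 1) * r / n) * φ (t - Ξ x) * φ' (t - Ξ x)
            + φ (t - Ξ x) * φ'' (t - Ξ x)
            + φ (t - Ξ x) ^ (2 : ℕ) * (-(deriv ξ x ^ 2) / (4 * (n + 1))
                + (n + 1) * r ^ 2 / n ^ 2
                + deriv (deriv ξ) x * ξ x / (2 * (n + 1)))) := by
    rw [hW.deriv_eq, hDW.deriv]
    simp only [hgdef, Pi.mul_apply, Pi.add_apply, Pi.neg_apply]
    rw [show (n + 1 - 1 : ℝ) = n by ring]
    rw [e2, e3, e4, ha, hb]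
    field_simp
    ring
  -- polynomial form of the ODE
  have hode : ((4 * r ^ 2 - p) * n ^ 2 + 4 * (2 * n + 1) * r ^ 2)
        * (φ (t - Ξ x) ^ n * φ (t - Ξ x)) * φ (t - Ξ x)
      + 4 * n * (n + 1) * (n * φ'' (t - Ξ x) - 2 * (n + 1) * r * φ' (t - Ξ x))
        * φ (t - Ξ x) ^ n * φ (t - Ξ x)
      + 4 * n ^ 3 * (n + 1) * φ' (t - Ξ x) ^ 2 * φ (t - Ξ x) ^ n
      - 4 * n ^ 2 * (n + 1) * φ'' (t - Ξ x) * φ (t - Ξ x) = 0 := by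
    have h0 := hODE (t - Ξ x)
    unfold ODE25 at h0
    rw [e4, e5] at h0
    field_simp at h0
    linear_combination h0
  -- finish by algebra
  rw [hfdef x hx, hhdef x hx, hptt, hkey, hudef t x hx, e1]
  rw [show φ (t - Ξ x) * ξ x ^ a * Real.exp (b * Ξ x)
      = φ (t - Ξ x) * (ξ x ^ a * Real.exp (b * Ξ x)) by ring]
  rw [Real.mul_rpow hA.le (mul_nonneg (Real.rpow_pos_of_pos hXx a).le hEb.le), e2, e5]
  simp only [hgdef]
  field_simp
  linear_combination (-(2:ℝ) * ξ x ^ (a * (n + 1)) * Real.exp (r * Ξ x)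
      * Real.exp (Ξ x * b)) * hode

end
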